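/- If a function f : ℂ → ℂ is simultaneously a rational function of s and a rational function of e^{2πis} (i.e., f(s) = P(s) = Q(e^{2πis}) for rational functions P, Q on the common domain of definition), then f is constant. -/

import Mathlib

open Complex Polynomial

private lemma entire_zero {f : ℂ → ℂ} (hf : Differentiable ℂ f) {U : Set ℂ} (hU : IsOpen U)
    {s₀ : ℂ} (hs₀ : s₀ ∈ U) (h0 : ∀ s ∈ U, f s = 0) : ∀ s, f s = 0 := by
  have ha : AnalyticOnNhd ℂ f Set.univ := hf.differentiableOn.analyticOnNhd isOpen_univ
  have := ha.eqOn_zero_of_preconnected_of_eventuallyEq_zero isPreconnected_univ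
    (Set.mem_univ s₀) (Filter.eventually_of_mem (hU.mem_nhds hs₀) h0)
  exact fun s => this (Set.mem_univ s)

private lemma rm_comp (p : Polynomial ℂ) (z : ℂ) :
    rootMultiplicity z (p.comp (X + C 1)) = rootMultiplicity (z + 1) p := by
  have h1 : (p.comp (X + C 1)).rootMultiplicity z
      = ((p.comp (X + C 1)).comp (X + C z)).rootMultiplicity 0 :=
    rootMultiplicity_eq_rootMultiplicity
  have h2 : p.rootMultiplicity (z + 1) = (p.comp (X + C (z + 1))).rootMultiplicity 0 :=
    rootMultiplicity_eq_rootMultiplicity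
  rw [h1, h2, comp_assoc]
  congr 2
  simp only [add_comp, X_comp, C_comp, C_add]
  ring

/-- A function which is simultaneously a rational function of `s` and a
rational function of `e^{2πis}` (equality holding on a nonempty open set where both
sides are defined) is constant. -/
theorem rational_in_s_and_exp_is_constant
    (p₁ p₂ q₁ q₂ : Polynomial ℂ) (hp₂ : p₂ ≠ 0) (hq₂ : q₂ ≠ 0)
    (U : Set ℂ) (hU : IsOpen U) (hne : U.Nonempty)
    (heq : ∀ s ∈ U, p₂.eval s ≠ 0 ∧
      q₂.eval (Complex.exp (2 * (Real.pi : ℂ) * Complex.I * s)) ≠ 0 ∧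
      p₁.eval s / p₂.eval s =
        q₁.eval (Complex.exp (2 * (Real.pi : ℂ) * Complex.I * s)) /
          q₂.eval (Complex.exp (2 * (Real.pi : ℂ) * Complex.I * s))) :
    ∃ c : ℂ, ∀ s ∈ U, p₁.eval s / p₂.eval s = c := by
  classical
  obtain ⟨s₀, hs₀⟩ := hne
  set e : ℂ → ℂ := fun s => Complex.exp (2 * (Real.pi : ℂ) * Complex.I * s) with he_def
  have hediff : Differentiable ℂ e := by
    have : Differentiable ℂ fun s : ℂ => 2 * (Real.pi : ℂ) * Complex.I * s :=
      (differentiable_id.const_mul _)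
    exact Complex.differentiable_exp.comp this
  have hecont : Continuous e := hediff.continuous
  -- F := p₁(s) q₂(e s) − q₁(e s) p₂(s) is entire and zero on U
  set F : ℂ → ℂ := fun s => p₁.eval s * q₂.eval (e s) - q₁.eval (e s) * p₂.eval s with hF_def
  have hFdiff : Differentiable ℂ F := by
    apply Differentiable.sub
    · exact (Polynomial.differentiable p₁).mul ((Polynomial.differentiable q₂).comp hediff)
    · exact ((Polynomial.differentiable q₁).comp hediff).mul (Polynomial.differentiable p₂)
  have hF0 : ∀ s ∈ U, F s = 0 := by
    intro s hs
    obtain ⟨h1, h2, h3⟩ := heq s hs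
    have := (div_eq_div_iff h1 h2).mp h3
    simp only [hF_def]
    rw [this]; ring
  have hF : ∀ s, F s = 0 := entire_zero hFdiff hU hs₀ hF0
  have he1 : ∀ s, e (s + 1) = e s := by
    intro s
    simp only [he_def]
    rw [mul_add, mul_one, Complex.exp_add, Complex.exp_two_pi_mul_I, mul_one]
  -- the shifted polynomial identity
  set H : Polynomial ℂ := p₁ * (p₂.comp (X + C 1)) - (p₁.comp (X + C 1)) * p₂ with hH_def
  have hHeval : ∀ s, H.eval s = p₁.eval s * p₂.eval (s + 1) - p₁.eval (s + 1) * p₂.eval s := by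
    intro s
    simp [hH_def, eval_comp]
  have hH0 : ∀ s, q₂.eval (e s) * H.eval s = 0 := by
    intro s
    have h1 := hF s
    have h2 := hF (s + 1)
    simp only [hF_def] at h1 h2
    rw [he1 s] at h2
    rw [hHeval s]
    linear_combination p₂.eval (s + 1) * h1 - p₂.eval s * h2
  -- q₂ ∘ e is nonzero near s₀
  have hq₂s₀ : q₂.eval (e s₀) ≠ 0 := (heq s₀ hs₀).2.1
  have hVopen : IsOpen {s : ℂ | q₂.eval (e s) ≠ 0} := by
    have : Continuous fun s => q₂.eval (e s) := (q₂.continuous_aeval.comp hecont)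
    exact isOpen_ne.preimage this
  have hH : H = 0 := by
    apply Polynomial.funext
    intro r
    have := entire_zero (Polynomial.differentiable H) (hU.inter hVopen)
      (Set.mem_inter hs₀ hq₂s₀) (fun s hs => by
        have := hH0 s
        exact (mul_eq_zero.mp this).resolve_left hs.2) r
    simpa using this
  by_cases hp₁ : p₁ = 0
  · exact ⟨0, fun s hs => by simp [hp₁]⟩
  -- polynomial identity
  have hid : p₁ * (p₂.comp (X + C 1)) = (p₁.comp (X + C 1)) * p₂ := by
    have := sub_eq_zero.mp hH
    exact this
  have hp₁c : p₁.comp (X + C 1) ≠ 0 := fun h => hp₁ (comp_X_add_C_eq_zero_iff.mp h)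
  have hp₂c : p₂.comp (X + C 1) ≠ 0 := fun h => hp₂ (comp_X_add_C_eq_zero_iff.mp h)
  have key : ∀ z : ℂ, rootMultiplicity z p₁ + rootMultiplicity (z + 1) p₂
      = rootMultiplicity (z + 1) p₁ + rootMultiplicity z p₂ := by
    intro z
    have hL : rootMultiplicity z (p₁ * p₂.comp (X + C 1))
        = rootMultiplicity z p₁ + rootMultiplicity z (p₂.comp (X + C 1)) :=
      rootMultiplicity_mul (mul_ne_zero hp₁ hp₂c)
    have hR : rootMultiplicity z ((p₁.comp (X + C 1)) * p₂)
        = rootMultiplicity z (p₁.comp (X + C 1)) + rootMultiplicity z p₂ :=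
      rootMultiplicity_mul (mul_ne_zero hp₁c hp₂)
    rw [rm_comp] at hL hR
    rw [← hL, ← hR, hid]
  have step : ∀ (z : ℂ) (n : ℕ), rootMultiplicity z p₁ + rootMultiplicity (z + n) p₂
      = rootMultiplicity (z + n) p₁ + rootMultiplicity z p₂ := by
    intro z n
    induction n with
    | zero => simp
    | succ n ih =>
      have := key (z + n)
      push_cast
      push_cast at ih
      rw [← add_assoc] at *
      omega
  have hsame : ∀ z : ℂ, rootMultiplicity z p₁ = rootMultiplicity z p₂ := by
    intro z
    -- find n with z + n not a root of p₁ * p₂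
    have hfin : ({x | (p₁ * p₂).IsRoot x}).Finite := by
      apply Set.Finite.subset (p₁ * p₂).roots.toFinset.finite_toSet
      intro x hx
      simp only [Multiset.mem_toFinset, Finset.coe_sort_coe, Set.mem_setOf_eq] at *
      exact Multiset.mem_toFinset.mpr ((mem_roots (mul_ne_zero hp₁ hp₂)).mpr hx)
    have hinj : Function.Injective fun n : ℕ => z + (n : ℂ) := by
      intro a b h
      simp only [add_right_inj] at h
      exact_mod_cast h
    obtain ⟨x, hxmem, hxnot⟩ : ∃ x ∈ Set.range fun n : ℕ => z + (n : ℂ),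
        x ∉ {x | (p₁ * p₂).IsRoot x} := by
      by_contra h
      push_neg at h
      exact (Set.infinite_range_of_injective hinj) (hfin.subset h)
    obtain ⟨n, rfl⟩ := hxmem
    have hroot : ¬ (p₁ * p₂).IsRoot (z + n) := hxnot
    simp only [IsRoot, eval_mul, mul_eq_zero, not_or] at hroot
    have h1 : rootMultiplicity (z + n) p₁ = 0 := rootMultiplicity_eq_zero hroot.1
    have h2 : rootMultiplicity (z + n) p₂ = 0 := rootMultiplicity_eq_zero hroot.2
    have := step z n
    omega
  -- same roots ⇒ proportional
  have hroots : p₁.roots = p₂.roots := by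
    ext a
    rw [count_roots, count_roots, hsame a]
  have h1 := (IsAlgClosed.splits p₁).eq_prod_roots
  have h2 := (IsAlgClosed.splits p₂).eq_prod_roots
  rw [hroots] at h1
  set M := (p₂.roots.map fun a => X - C a).prod with hM
  refine ⟨p₁.leadingCoeff / p₂.leadingCoeff, fun s hs => ?_⟩
  have hp2s : p₂.eval s ≠ 0 := (heq s hs).1
  have hb : p₂.leadingCoeff ≠ 0 := leadingCoeff_ne_zero.mpr hp₂
  have hMs : M.eval s ≠ 0 := by
    intro h
    apply hp2s
    rw [h2, eval_mul, h, mul_zero]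
  have hev1 : p₁.eval s = p₁.leadingCoeff * M.eval s := by
    conv_lhs => rw [h1]
    simp
  have hev2 : p₂.eval s = p₂.leadingCoeff * M.eval s := by
    conv_lhs => rw [h2]
    simp
  rw [hev1, hev2, mul_div_mul_right _ _ hMs]
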